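/- Let p be a prime and I, J ⊆ ℕ. The pair (I, J) is an admissible index-pair (i.e. R(I,J) is a subgroup of R(F_p)) if and only if all of the following hold: (1) for every j ∈ J and every n ∈ {1, …, j+1} such that the binomial coefficient C(j+1, n) is not divisible by p, one has {j + n·j' : j' ∈ J} ⊆ J; (2) I is closed under addition; (3) for every i ∈ I and every n ∈ {1, …, i} such that C(i, n) is not divisible by p, one has {i + n·j : j ∈ J} ⊆ I. -/

import Mathlib

open PowerSeries Finset

namespace RiordanPaper

variable {K : Type*} [CommRing K]

noncomputable def comp (f g : PowerSeries K) : PowerSeries K :=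
  PowerSeries.mk fun n => ∑ d ∈ Finset.range (n + 1), coeff d f * coeff n (g ^ d)

lemma coeff_comp (f g : PowerSeries K) (n : ℕ) :
    coeff n (comp f g) = ∑ d ∈ Finset.range (n + 1), coeff d f * coeff n (g ^ d) := by
  simp [comp]

lemma coeff_pow_eq_zero {g : PowerSeries K} (hg : constantCoeff g = 0) {n d : ℕ}
    (h : n < d) : coeff n (g ^ d) = 0 := by
  have hdvd : (X : PowerSeries K) ^ d ∣ g ^ d :=
    pow_dvd_pow_of_dvd (PowerSeries.X_dvd_iff.2 hg) d
  exact (PowerSeries.X_pow_dvd_iff.1 hdvd) n h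

lemma coeff_comp_of_lt {g : PowerSeries K} (hg : constantCoeff g = 0)
    (f : PowerSeries K) {n N : ℕ} (hn : n < N) :
    coeff n (comp f g) = ∑ d ∈ Finset.range N, coeff d f * coeff n (g ^ d) := by
  rw [coeff_comp]
  apply Finset.sum_subset
  · intro d hd
    simp only [Finset.mem_range] at hd ⊢
    omega
  · intro d _ hd'
    simp only [Finset.mem_range] at hd'
    rw [coeff_pow_eq_zero hg (by omega), mul_zero]

lemma coeff_eval₂ {g : PowerSeries K} (hg : constantCoeff g = 0)
    (P : Polynomial K) (n : ℕ) :
    coeff n (Polynomial.eval₂ (C (R := K)) g P)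
      = ∑ d ∈ Finset.range (n + 1), P.coeff d * coeff n (g ^ d) := by
  classical
  have h1 : P.natDegree < max (n + 1) (P.natDegree + 1) :=
    lt_of_lt_of_le (Nat.lt_succ_self _) (le_max_right _ _)
  rw [Polynomial.eval₂_eq_sum_range' (C (R := K)) h1 g, map_sum]
  have h2 : ∀ d ∈ Finset.range (max (n + 1) (P.natDegree + 1)),
      coeff n (C (R := K) (P.coeff d) * g ^ d) = P.coeff d * coeff n (g ^ d) := fun d _ => by
    rw [coeff_C_mul]
  rw [Finset.sum_congr rfl h2]
  symm
  apply Finset.sum_subset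
  · intro d hd
    simp only [Finset.mem_range] at hd ⊢
    omega
  · intro d _ hd'
    simp only [Finset.mem_range] at hd'
    rw [coeff_pow_eq_zero hg (by omega), mul_zero]

lemma coeff_comp_eq_eval₂_trunc {g : PowerSeries K} (hg : constantCoeff g = 0)
    (f : PowerSeries K) {n N : ℕ} (hn : n < N) :
    coeff n (comp f g) = coeff n (Polynomial.eval₂ (C (R := K)) g (trunc N f)) := by
  rw [coeff_eval₂ hg, coeff_comp]
  apply Finset.sum_congr rfl
  intro d hd
  simp only [Finset.mem_range] at hd
  rw [PowerSeries.coeff_trunc, if_pos (by omega)]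

lemma mul_comp {g : PowerSeries K} (hg : constantCoeff g = 0) (f₁ f₂ : PowerSeries K) :
    comp (f₁ * f₂) g = comp f₁ g * comp f₂ g := by
  ext n
  have key : coeff n (comp (f₁ * f₂) g)
      = coeff n (Polynomial.eval₂ (C (R := K)) g (trunc (n + 1) f₁ * trunc (n + 1) f₂)) := by
    rw [coeff_eval₂ hg, coeff_comp]
    apply Finset.sum_congr rfl
    intro d hd
    simp only [Finset.mem_range] at hd
    congr 1
    rw [Polynomial.coeff_mul, PowerSeries.coeff_mul]
    apply Finset.sum_congr rfl
    intro ab hab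
    rw [Finset.HasAntidiagonal.mem_antidiagonal] at hab
    rw [PowerSeries.coeff_trunc, PowerSeries.coeff_trunc, if_pos (by omega), if_pos (by omega)]
  rw [key, Polynomial.eval₂_mul, PowerSeries.coeff_mul, PowerSeries.coeff_mul]
  apply Finset.sum_congr rfl
  intro ab hab
  rw [Finset.HasAntidiagonal.mem_antidiagonal] at hab
  rw [← coeff_comp_eq_eval₂_trunc hg f₁ (show ab.1 < n + 1 by omega),
    ← coeff_comp_eq_eval₂_trunc hg f₂ (show ab.2 < n + 1 by omega)]

lemma one_comp (g : PowerSeries K) : comp (1 : PowerSeries K) g = 1 := by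
  ext n
  rw [coeff_comp, Finset.sum_eq_single 0]
  · simp
  · intro d _ hd0
    simp [PowerSeries.coeff_one, hd0]
  · intro h
    simp at h

lemma comp_X (f : PowerSeries K) : comp f X = f := by
  ext n
  rw [coeff_comp, Finset.sum_eq_single n]
  · rw [coeff_X_pow, if_pos rfl, mul_one]
  · intro d _ hdn
    rw [coeff_X_pow, if_neg (fun h => hdn h.symm), mul_zero]
  · intro h
    simp at h

lemma X_comp {g : PowerSeries K} (hg : constantCoeff g = 0) : comp X g = g := by
  ext n
  rcases Nat.eq_zero_or_pos n with hn | hn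
  · subst hn
    rw [coeff_comp]
    simp [PowerSeries.coeff_X, coeff_zero_eq_constantCoeff_apply, hg]
  · rw [coeff_comp, Finset.sum_eq_single 1]
    · rw [coeff_one_X, pow_one, one_mul]
    · intro d _ hd1
      rw [PowerSeries.coeff_X, if_neg hd1, zero_mul]
    · intro h
      simp only [Finset.mem_range] at h
      omega

lemma constantCoeff_comp (f g : PowerSeries K) :
    constantCoeff (comp f g) = constantCoeff f := by
  rw [← coeff_zero_eq_constantCoeff_apply, coeff_comp]
  simp

lemma coeff_one_comp (f g : PowerSeries K) :
    coeff 1 (comp f g) = coeff 1 f * coeff 1 g := by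
  rw [coeff_comp]
  have : Finset.range 2 = {0, 1} := rfl
  rw [this, Finset.sum_insert (by simp), Finset.sum_singleton, pow_zero, pow_one]
  simp [PowerSeries.coeff_one]

lemma comp_assoc {g k : PowerSeries K} (hg : constantCoeff g = 0)
    (hk : constantCoeff k = 0) (f : PowerSeries K) :
    comp (comp f g) k = comp f (comp g k) := by
  have hpow : ∀ e : ℕ, (comp g k) ^ e = comp (g ^ e) k := by
    intro e
    induction e with
    | zero => simp [one_comp]
    | succ m ih => rw [pow_succ, pow_succ, ih, mul_comp hk]
  ext n
  rw [coeff_comp, coeff_comp]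
  have L1 : ∀ d ∈ Finset.range (n + 1), coeff d (comp f g) * coeff n (k ^ d)
      = ∑ e ∈ Finset.range (n + 1), coeff e f * coeff d (g ^ e) * coeff n (k ^ d) := by
    intro d hd
    simp only [Finset.mem_range] at hd
    rw [coeff_comp_of_lt hg f hd, Finset.sum_mul]
  rw [Finset.sum_congr rfl L1, Finset.sum_comm]
  apply Finset.sum_congr rfl
  intro e _
  rw [hpow e, coeff_comp, Finset.mul_sum]
  apply Finset.sum_congr rfl
  intro d _
  ring

/-- An element of the Riordan group: a pair `(h, g)` with
`h = 1 + a₁x + ⋯` and `g = x + b₂x² + ⋯`. -/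
@[ext]
structure RiordanElem (K : Type*) [CommRing K] where
  h : PowerSeries K
  g : PowerSeries K
  h_zero : constantCoeff h = 1
  g_zero : constantCoeff g = 0
  g_one : coeff 1 g = 1

namespace RiordanElem

noncomputable instance : Mul (RiordanElem K) :=
  ⟨fun a b => ⟨a.h * comp b.h a.g, comp b.g a.g,
    by rw [map_mul, a.h_zero, one_mul, constantCoeff_comp, b.h_zero],
    by rw [constantCoeff_comp, b.g_zero],
    by rw [coeff_one_comp, b.g_one, a.g_one, one_mul]⟩⟩

noncomputable instance : One (RiordanElem K) :=
  ⟨⟨1, X, map_one _, constantCoeff_X, coeff_one_X⟩⟩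

@[simp] lemma mul_h (a b : RiordanElem K) : (a * b).h = a.h * comp b.h a.g := rfl
@[simp] lemma mul_g (a b : RiordanElem K) : (a * b).g = comp b.g a.g := rfl
@[simp] lemma one_h : (1 : RiordanElem K).h = 1 := rfl
@[simp] lemma one_g : (1 : RiordanElem K).g = X := rfl

noncomputable instance instMonoid : Monoid (RiordanElem K) where
  mul_assoc a b c := by
    ext1
    · show (a.h * comp b.h a.g) * comp c.h (comp b.g a.g)
        = a.h * comp (b.h * comp c.h b.g) a.g
      rw [mul_comp a.g_zero, ← comp_assoc b.g_zero a.g_zero, mul_assoc]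
    · show comp c.g (comp b.g a.g) = comp (comp c.g b.g) a.g
      rw [comp_assoc b.g_zero a.g_zero]
  one_mul a := by
    ext1
    · show (1 : PowerSeries K) * comp a.h X = a.h
      rw [comp_X, one_mul]
    · show comp a.g X = a.g
      exact comp_X a.g
  mul_one a := by
    ext1
    · show a.h * comp 1 a.g = a.h
      rw [one_comp, mul_one]
    · show comp X a.g = a.g
      exact X_comp a.g_zero

end RiordanElem

/-- The Riordan group over `K`, realized as the units of the Riordan monoid. -/
noncomputable abbrev RiordanGroup (K : Type*) [CommRing K] := (RiordanElem K)ˣ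

/-- An element of the Nottingham group: `g = x + b₂x² + ⋯`. -/
@[ext]
structure NottinghamElem (K : Type*) [CommRing K] where
  g : PowerSeries K
  g_zero : constantCoeff g = 0
  g_one : coeff 1 g = 1

namespace NottinghamElem

noncomputable instance : Mul (NottinghamElem K) :=
  ⟨fun a b => ⟨comp b.g a.g,
    by rw [constantCoeff_comp, b.g_zero],
    by rw [coeff_one_comp, b.g_one, a.g_one, one_mul]⟩⟩

noncomputable instance : One (NottinghamElem K) :=
  ⟨⟨X, constantCoeff_X, coeff_one_X⟩⟩

@[simp] lemma mul_g (a b : NottinghamElem K) : (a * b).g = comp b.g a.g := rfl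
@[simp] lemma one_g : (1 : NottinghamElem K).g = X := rfl

noncomputable instance instMonoid : Monoid (NottinghamElem K) where
  mul_assoc a b c := by
    ext1
    show comp c.g (comp b.g a.g) = comp (comp c.g b.g) a.g
    rw [comp_assoc b.g_zero a.g_zero]
  one_mul a := by
    ext1
    show comp a.g X = a.g
    exact comp_X a.g
  mul_one a := by
    ext1
    show comp X a.g = a.g
    exact X_comp a.g_zero

end NottinghamElem

/-- The Nottingham group over `K`, realized as the units of the Nottingham monoid. -/
noncomputable abbrev NottinghamGroup (K : Type*) [CommRing K] := (NottinghamElem K)ˣ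


/-- The subset `R(I,J) = H(I) ⋊ N(J)` of the Riordan group over `F_p`:
pairs `(h, g)` with `h = 1 + ∑_{i ∈ I} aᵢ xⁱ` and `g = x + ∑_{j ∈ J} bⱼ x^{j+1}`. -/
def RIJ (p : ℕ) (I J : Set ℕ) : Set (RiordanGroup (ZMod p)) :=
  {u | (∀ i, 0 < i → i ∉ I → coeff i ((u : RiordanElem (ZMod p)).h) = 0) ∧
       (∀ j, 0 < j → j ∉ J → coeff (j + 1) ((u : RiordanElem (ZMod p)).g) = 0)}

/-- `(I, J)` is an admissible index-pair: `R(I,J)` is a subgroup of `R(F_p)`. -/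
def IsAdmissible (p : ℕ) (I J : Set ℕ) : Prop :=
  ∃ S : Subgroup (RiordanGroup (ZMod p)), (S : Set (RiordanGroup (ZMod p))) = RIJ p I J

/-! ### Auxiliary machinery -/

section AuxGeneric

variable {K : Type*} [CommRing K]

lemma coeff_pow_self {g : PowerSeries K} (hg : constantCoeff g = 0) :
    ∀ n, coeff n (g ^ n) = (coeff 1 g) ^ n
  | 0 => by simp
  | (n+1) => by
    rw [pow_succ, PowerSeries.coeff_mul, Finset.sum_eq_single (n, 1)]
    · rw [coeff_pow_self hg n, pow_succ]
    · rintro ⟨u, v⟩ huv hne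
      rw [Finset.HasAntidiagonal.mem_antidiagonal] at huv
      rcases lt_trichotomy u n with h | h | h
      · rw [coeff_pow_eq_zero hg h, zero_mul]
      · exact absurd (by simp only [Prod.mk.injEq]; omega) hne
      · have hv : v = 0 := by omega
        subst hv
        rw [coeff_zero_eq_constantCoeff_apply, hg, mul_zero]
    · intro h
      exact absurd (Finset.HasAntidiagonal.mem_antidiagonal.2 (by omega)) h

/-- Agreement of coefficients up to degree `N`. -/
def CoeffEq (N : ℕ) (f g : PowerSeries K) : Prop := ∀ k, k ≤ N → coeff k f = coeff k g

lemma coeffEq_refl (N : ℕ) (f : PowerSeries K) : CoeffEq N f f := fun _ _ => rfl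

lemma CoeffEq.mul {N : ℕ} {a b c d : PowerSeries K} (h1 : CoeffEq N a b) (h2 : CoeffEq N c d) :
    CoeffEq N (a * c) (b * d) := by
  intro k hk
  rw [PowerSeries.coeff_mul, PowerSeries.coeff_mul]
  apply Finset.sum_congr rfl
  rintro ⟨u, v⟩ huv
  rw [Finset.HasAntidiagonal.mem_antidiagonal] at huv
  rw [h1 u (by omega), h2 v (by omega)]

lemma CoeffEq.pow {N : ℕ} {a b : PowerSeries K} (h : CoeffEq N a b) :
    ∀ d, CoeffEq N (a ^ d) (b ^ d)
  | 0 => by rw [pow_zero, pow_zero]; exact coeffEq_refl N 1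
  | (d+1) => by rw [pow_succ, pow_succ]; exact (h.pow d).mul h

lemma CoeffEq.comp {N : ℕ} {f f' g g' : PowerSeries K} (h1 : CoeffEq N f f')
    (h2 : CoeffEq N g g') : CoeffEq N (comp f g) (comp f' g') := by
  intro k hk
  rw [coeff_comp, coeff_comp]
  apply Finset.sum_congr rfl
  intro d hd
  rw [Finset.mem_range] at hd
  rw [h1 d (by omega), (h2.pow d) k hk]

/-- Elementary series `x + β x^(j+1)`. -/
noncomputable def elem (β : K) (j : ℕ) : PowerSeries K := X + C (R := K) β * X ^ (j + 1)

lemma constantCoeff_elem (β : K) (j : ℕ) : constantCoeff (elem β j) = 0 := by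
  simp [elem]

lemma coeff_elem (β : K) (j m : ℕ) :
    coeff m (elem β j) = (if m = 1 then 1 else 0) + (if m = j + 1 then β else 0) := by
  simp only [elem, map_add, PowerSeries.coeff_X, coeff_C_mul, PowerSeries.coeff_X_pow]
  split_ifs <;> simp

lemma coeff_elem_pow (β : K) (j d m : ℕ) :
    coeff m ((elem β j) ^ d)
      = ∑ n ∈ Finset.range (d + 1),
          (d.choose n : K) * β ^ n * (if m = d + n * j then 1 else 0) := by
  rw [elem, add_pow, map_sum, ← Finset.sum_range_reflect]
  apply Finset.sum_congr rfl
  intro k hk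
  rw [Finset.mem_range] at hk
  have hk' : k ≤ d := by omega
  have e1 : d + 1 - 1 - k = d - k := by omega
  have e2 : d - (d - k) = k := by omega
  rw [e1, e2, Nat.choose_symm hk']
  have e3 : (C (R := K) β * X ^ (j + 1)) ^ k = C (R := K) (β ^ k) * X ^ ((j + 1) * k) := by
    rw [mul_pow, ← map_pow, ← pow_mul]
  rw [e3, ← map_natCast (C (R := K)) (d.choose k)]
  have e4 : (X : PowerSeries K) ^ (d - k) * (C (R := K) (β ^ k) * X ^ ((j + 1) * k))
        * C (R := K) ((d.choose k : K))
      = C (R := K) ((d.choose k : K) * β ^ k) * X ^ ((d - k) + (j + 1) * k) := by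
    rw [map_mul, pow_add]; ring
  rw [e4, coeff_C_mul, PowerSeries.coeff_X_pow]
  have e5 : d - k + (j + 1) * k = d + k * j := by
    have h6 : d - k + k = d := by omega
    calc d - k + (j + 1) * k = (d - k + k) + k * j := by ring
    _ = d + k * j := by rw [h6]
  rw [e5]

lemma coeff_comp_elem (f : PowerSeries K) (β : K) (j m : ℕ) :
    coeff m (comp f (elem β j))
      = ∑ d ∈ Finset.range (m + 1), ∑ n ∈ Finset.range (d + 1),
          coeff d f * ((d.choose n : K) * β ^ n * (if m = d + n * j then 1 else 0)) := by
  rw [coeff_comp]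
  apply Finset.sum_congr rfl
  intro d _
  rw [coeff_elem_pow, Finset.mul_sum]

end AuxGeneric
section AuxSupport

variable {K : Type*} [CommRing K]

/-- Support condition for the `h`-component. -/
def PIh (I : Set ℕ) (h : PowerSeries K) : Prop := ∀ i, 0 < i → i ∉ I → coeff i h = 0

/-- Support condition for the `g`-component. -/
def PJg (J : Set ℕ) (g : PowerSeries K) : Prop := ∀ j, 0 < j → j ∉ J → coeff (j + 1) g = 0

lemma PJg_X (J : Set ℕ) : PJg J (X : PowerSeries K) := by
  intro j hj _
  rw [PowerSeries.coeff_X, if_neg (by omega)]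

/-- Finite right-compositions of elementary series with exponents in `J`. -/
inductive IsEProd (J : Set ℕ) : PowerSeries K → Prop
  | base : IsEProd J X
  | step {c : PowerSeries K} (β : K) {j : ℕ} (hj : j ∈ J) (hj0 : 0 < j) (hc : IsEProd J c) :
      IsEProd J (comp c (elem β j))

lemma IsEProd.const0 {J : Set ℕ} {c : PowerSeries K} (h : IsEProd J c) :
    constantCoeff c = 0 := by
  induction h with
  | base => exact constantCoeff_X
  | @step c' β j hj hj0 hc ih => rw [constantCoeff_comp]; exact ih

lemma IsEProd.coeff1 {J : Set ℕ} {c : PowerSeries K} (h : IsEProd J c) :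
    coeff 1 c = 1 := by
  induction h with
  | base => exact coeff_one_X
  | @step c' β j hj hj0 hc ih =>
      rw [coeff_one_comp, ih, one_mul, coeff_elem, if_pos rfl, if_neg (by omega), add_zero]

lemma PIh_mul {I : Set ℕ} (c2 : ∀ i ∈ I, ∀ i' ∈ I, i + i' ∈ I) {h₁ h₂ : PowerSeries K}
    (hh₁ : PIh I h₁) (hh₂ : PIh I h₂) : PIh I (h₁ * h₂) := by
  intro m hm hmI
  rw [PowerSeries.coeff_mul]
  apply Finset.sum_eq_zero
  rintro ⟨u, v⟩ huv
  rw [Finset.HasAntidiagonal.mem_antidiagonal] at huv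
  rcases Nat.eq_zero_or_pos u with hu | hu
  · have hv : v = m := by omega
    rw [hv, hh₂ m hm hmI, mul_zero]
  · rcases Nat.eq_zero_or_pos v with hv | hv
    · have hu' : u = m := by omega
      rw [hu', hh₁ m hm hmI, zero_mul]
    · by_cases huI : u ∈ I
      · by_cases hvI : v ∈ I
        · exact absurd (huv ▸ c2 u huI v hvI) hmI
        · rw [hh₂ v hv hvI, mul_zero]
      · rw [hh₁ u hu huI, zero_mul]

end AuxSupport

section AuxModP

variable (p : ℕ)

lemma PJg_comp_elem {J : Set ℕ}
    (c1 : ∀ j ∈ J, ∀ n : ℕ, 1 ≤ n → n ≤ j + 1 → ¬ (p ∣ Nat.choose (j + 1) n) →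
      ∀ j' ∈ J, j + n * j' ∈ J)
    {f : PowerSeries (ZMod p)} (hf : PJg J f) {β : ZMod p} {j : ℕ} (hj : j ∈ J) :
    PJg J (comp f (elem β j)) := by
  intro m hm hmJ
  rw [coeff_comp_elem]
  apply Finset.sum_eq_zero
  intro d hd
  apply Finset.sum_eq_zero
  intro n hn
  rw [Finset.mem_range] at hd hn
  by_cases hcond : m + 1 = d + n * j
  swap
  · rw [if_neg hcond, mul_zero, mul_zero]
  rcases Nat.lt_or_ge d 2 with hd2 | hd2
  · interval_cases d
    · interval_cases n
      · omega
    · interval_cases n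
      · omega
      · exfalso
        have hmj : m = j := by omega
        exact hmJ (hmj ▸ hj)
  · by_cases hdJ : d - 1 ∈ J
    · rcases Nat.eq_zero_or_pos n with hn0 | hn0
      · exfalso
        rw [hn0, Nat.zero_mul, Nat.add_zero] at hcond
        have hmd : m = d - 1 := by omega
        exact hmJ (hmd ▸ hdJ)
      · by_cases hdvd : p ∣ Nat.choose d n
        · have hz : ((Nat.choose d n : ℕ) : ZMod p) = 0 :=
            (ZMod.natCast_eq_zero_iff _ _).2 hdvd
          rw [hz, zero_mul, zero_mul, mul_zero]
        · exfalso
          have hch : ¬ p ∣ Nat.choose ((d - 1) + 1) n := by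
            rwa [Nat.sub_add_cancel (by omega)]
          have hmem := c1 (d - 1) hdJ n hn0 (by omega) hch j hj
          have hme : m = d - 1 + n * j := by omega
          exact hmJ (hme ▸ hmem)
    · have hz : coeff d f = 0 := by
        have := hf (d - 1) (by omega) hdJ
        rwa [Nat.sub_add_cancel (by omega)] at this
      rw [hz, zero_mul]

lemma PIh_comp_elem {I J : Set ℕ}
    (c3 : ∀ i ∈ I, ∀ n : ℕ, 1 ≤ n → n ≤ i → ¬ (p ∣ Nat.choose i n) → ∀ j ∈ J, i + n * j ∈ I)
    {f : PowerSeries (ZMod p)} (hf : PIh I f) {β : ZMod p} {j : ℕ} (hj : j ∈ J) :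
    PIh I (comp f (elem β j)) := by
  intro m hm hmI
  rw [coeff_comp_elem]
  apply Finset.sum_eq_zero
  intro d hd
  apply Finset.sum_eq_zero
  intro n hn
  rw [Finset.mem_range] at hd hn
  by_cases hcond : m = d + n * j
  swap
  · rw [if_neg hcond, mul_zero, mul_zero]
  rcases Nat.eq_zero_or_pos d with hd0 | hd0
  · have hn0 : n = 0 := by omega
    rw [hd0, hn0, Nat.zero_mul, Nat.add_zero] at hcond
    omega
  · by_cases hdI : d ∈ I
    · rcases Nat.eq_zero_or_pos n with hn0 | hn0
      · exfalso
        rw [hn0, Nat.zero_mul, Nat.add_zero] at hcond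
        exact hmI (hcond ▸ hdI)
      · by_cases hdvd : p ∣ Nat.choose d n
        · have hz : ((Nat.choose d n : ℕ) : ZMod p) = 0 :=
            (ZMod.natCast_eq_zero_iff _ _).2 hdvd
          rw [hz, zero_mul, zero_mul, mul_zero]
        · exfalso
          have hmem := c3 d hdI n hn0 (by omega) hdvd j hj
          exact hmI (hcond ▸ hmem)
    · rw [hf d hd0 hdI, zero_mul]

end AuxModP
section AuxModP2

variable (p : ℕ)

lemma IsEProd.pjg {J : Set ℕ}
    (c1 : ∀ j ∈ J, ∀ n : ℕ, 1 ≤ n → n ≤ j + 1 → ¬ (p ∣ Nat.choose (j + 1) n) →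
      ∀ j' ∈ J, j + n * j' ∈ J)
    {c : PowerSeries (ZMod p)} (hc : IsEProd J c) : PJg J c := by
  induction hc with
  | base => exact PJg_X J
  | @step c' β j hj hj0 hc' ih => exact PJg_comp_elem p c1 ih hj

lemma PJg_comp_eprod {J : Set ℕ}
    (c1 : ∀ j ∈ J, ∀ n : ℕ, 1 ≤ n → n ≤ j + 1 → ¬ (p ∣ Nat.choose (j + 1) n) →
      ∀ j' ∈ J, j + n * j' ∈ J)
    {g c : PowerSeries (ZMod p)} (hg : PJg J g) (hc : IsEProd J c) : PJg J (comp g c) := by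
  induction hc with
  | base => rwa [comp_X]
  | @step c' β j hj hj0 hc' ih =>
      rw [← comp_assoc hc'.const0 (constantCoeff_elem β j) g]
      exact PJg_comp_elem p c1 ih hj

lemma PIh_comp_eprod {I J : Set ℕ}
    (c3 : ∀ i ∈ I, ∀ n : ℕ, 1 ≤ n → n ≤ i → ¬ (p ∣ Nat.choose i n) → ∀ j ∈ J, i + n * j ∈ I)
    {h c : PowerSeries (ZMod p)} (hh : PIh I h) (hc : IsEProd J c) : PIh I (comp h c) := by
  induction hc with
  | base => rwa [comp_X]
  | @step c' β j hj hj0 hc' ih =>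
      rw [← comp_assoc hc'.const0 (constantCoeff_elem β j) h]
      exact PIh_comp_elem p c3 ih hj

lemma exists_eprod_approx {J : Set ℕ} (hJ0 : 0 ∉ J)
    (c1 : ∀ j ∈ J, ∀ n : ℕ, 1 ≤ n → n ≤ j + 1 → ¬ (p ∣ Nat.choose (j + 1) n) →
      ∀ j' ∈ J, j + n * j' ∈ J)
    {a : PowerSeries (ZMod p)} (h0 : constantCoeff a = 0)
    (h1 : coeff 1 a = 1) (ha : PJg J a) :
    ∀ N : ℕ, ∃ c : PowerSeries (ZMod p), IsEProd J c ∧ CoeffEq N c a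
  | 0 => by
    refine ⟨X, IsEProd.base, ?_⟩
    intro k hk
    have hk0 : k = 0 := by omega
    subst hk0
    rw [coeff_zero_eq_constantCoeff_apply, coeff_zero_eq_constantCoeff_apply,
      constantCoeff_X, h0]
  | (N+1) => by
    obtain ⟨c, hc, hcc⟩ := exists_eprod_approx hJ0 c1 h0 h1 ha N
    by_cases hend : coeff (N+1) c = coeff (N+1) a
    · refine ⟨c, hc, ?_⟩
      intro k hk
      rcases Nat.lt_or_ge k (N+1) with h | h
      · exact hcc k (by omega)
      · have hkN : k = N + 1 := by omega
        subst hkN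
        exact hend
    · have hN0 : 0 < N := by
        rcases Nat.eq_zero_or_pos N with h | h
        · exfalso
          apply hend
          rw [h, hc.coeff1, h1]
        · exact h
      have hNJ : N ∈ J := by
        by_contra hNJ
        exact hend (by rw [hc.pjg p c1 N hN0 hNJ, ha N hN0 hNJ])
      set δ : ZMod p := coeff (N+1) a - coeff (N+1) c with hδ
      refine ⟨comp c (elem δ N), IsEProd.step δ hNJ hN0 hc, ?_⟩
      intro k hk
      rw [coeff_comp_elem]
      rcases Nat.lt_or_ge k (N+1) with hkN | hkN
      · -- low coefficients unchanged
        rw [Finset.sum_eq_single k]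
        · rw [Finset.sum_eq_single 0]
          · rw [if_pos (by omega : k = k + 0 * N)]
            simpa using hcc k (by omega)
          · intro n hn hn0
            rw [Finset.mem_range] at hn
            have hnN : N ≤ n * N := Nat.le_mul_of_pos_left N (by omega)
            rw [if_neg (by omega), mul_zero, mul_zero]
          · intro hk'
            exact absurd (Finset.mem_range.2 (by omega)) hk'
        · intro d hd hdk
          apply Finset.sum_eq_zero
          intro n hn
          rw [Finset.mem_range] at hd hn
          rcases Nat.eq_zero_or_pos n with hn0 | hn0
          · rw [hn0, Nat.zero_mul, Nat.add_zero]
            rw [if_neg (by omega), mul_zero, mul_zero]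
          · rcases Nat.eq_zero_or_pos d with hd0 | hd0
            · exfalso; omega
            · have hnN : N ≤ n * N := Nat.le_mul_of_pos_left N (by omega)
              rw [if_neg (by omega), mul_zero, mul_zero]
        · intro hk'
          exact absurd (Finset.mem_range.2 (by omega)) hk'
      · -- top coefficient
        have hk1 : k = N + 1 := by omega
        subst hk1
        have expand : ∀ d ∈ Finset.range (N+2),
            (∑ n ∈ Finset.range (d+1), coeff d c *
              ((d.choose n : ZMod p) * δ ^ n * (if N+1 = d + n * N then 1 else 0)))
            = (if d = N+1 then coeff (N+1) c else 0) + (if d = 1 then δ else 0) := by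
          intro d hd
          rw [Finset.mem_range] at hd
          by_cases hd1 : d = 1
          · subst hd1
            rw [if_neg (by omega), if_pos rfl, zero_add]
            rw [Finset.sum_range_succ, Finset.sum_range_succ, Finset.sum_range_zero]
            rw [if_neg (by omega), if_pos (by omega)]
            simp [hc.coeff1]
          · by_cases hdN : d = N+1
            · subst hdN
              rw [if_pos rfl, if_neg hd1, add_zero]
              rw [Finset.sum_eq_single 0]
              · rw [if_pos (by omega : N + 1 = N + 1 + 0 * N)]
                simp
              · intro n hn hn0
                rw [Finset.mem_range] at hn
                have hnN : N ≤ n * N := Nat.le_mul_of_pos_left N (by omega)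
                rw [if_neg (by omega), mul_zero, mul_zero]
              · intro hk'
                exact absurd (Finset.mem_range.2 (by omega)) hk'
            · rw [if_neg hdN, if_neg hd1, add_zero]
              apply Finset.sum_eq_zero
              intro n hn
              rw [Finset.mem_range] at hn
              rcases Nat.eq_zero_or_pos d with hd0 | hd0
              · subst hd0
                rw [coeff_zero_eq_constantCoeff_apply, hc.const0, zero_mul]
              · rcases Nat.lt_or_ge n 2 with hn2 | hn2
                · interval_cases n
                  · rw [Nat.zero_mul, Nat.add_zero, if_neg (by omega), mul_zero, mul_zero]
                  · rw [Nat.one_mul, if_neg (by omega), mul_zero, mul_zero]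
                · have hnN : 2 * N ≤ n * N := Nat.mul_le_mul_right N (by omega)
                  rw [if_neg (by omega), mul_zero, mul_zero]
        rw [Finset.sum_congr rfl expand, Finset.sum_add_distrib,
          Finset.sum_ite_eq' (Finset.range (N+2)) (N+1),
          Finset.sum_ite_eq' (Finset.range (N+2)) 1,
          if_pos (Finset.mem_range.2 (by omega)), if_pos (Finset.mem_range.2 (by omega)), hδ]
        ring

/-- Membership conditions for `R(I,J)` at the level of `RiordanElem`. -/
def MemR (I J : Set ℕ) (a : RiordanElem (ZMod p)) : Prop := PIh I a.h ∧ PJg J a.g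

lemma MemR_one (I J : Set ℕ) : MemR p I J 1 := by
  constructor
  · intro i hi _
    rw [RiordanElem.one_h, PowerSeries.coeff_one, if_neg (by omega)]
  · intro j hj _
    rw [RiordanElem.one_g, PowerSeries.coeff_X, if_neg (by omega)]

lemma MemR_mul {I J : Set ℕ} (hJ0 : 0 ∉ J)
    (c1 : ∀ j ∈ J, ∀ n : ℕ, 1 ≤ n → n ≤ j + 1 → ¬ (p ∣ Nat.choose (j + 1) n) →
      ∀ j' ∈ J, j + n * j' ∈ J)
    (c2 : ∀ i ∈ I, ∀ i' ∈ I, i + i' ∈ I)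
    (c3 : ∀ i ∈ I, ∀ n : ℕ, 1 ≤ n → n ≤ i → ¬ (p ∣ Nat.choose i n) → ∀ j ∈ J, i + n * j ∈ I)
    {a b : RiordanElem (ZMod p)} (hA : MemR p I J a) (hB : MemR p I J b) :
    MemR p I J (a * b) := by
  obtain ⟨ha1, ha2⟩ := hA
  obtain ⟨hb1, hb2⟩ := hB
  constructor
  · intro m hm hmI
    obtain ⟨c, hc, hcc⟩ := exists_eprod_approx p hJ0 c1 a.g_zero a.g_one ha2 m
    have e : coeff m ((a * b).h) = coeff m (a.h * comp b.h c) := by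
      rw [RiordanElem.mul_h]
      exact (((coeffEq_refl m a.h).mul ((coeffEq_refl m b.h).comp hcc)) m le_rfl).symm
    rw [e]
    exact PIh_mul c2 ha1 (PIh_comp_eprod p c3 hb1 hc) m hm hmI
  · intro m hm hmJ
    obtain ⟨c, hc, hcc⟩ := exists_eprod_approx p hJ0 c1 a.g_zero a.g_one ha2 (m+1)
    have e : coeff (m+1) ((a * b).g) = coeff (m+1) (comp b.g c) := by
      rw [RiordanElem.mul_g]
      exact (((coeffEq_refl (m+1) b.g).comp hcc) (m+1) le_rfl).symm
    rw [e]
    exact PJg_comp_eprod p c1 hb2 hc m hm hmJ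

end AuxModP2
section AuxInverse

variable {K : Type*} [CommRing K]

/-- Coefficients of the compositional left inverse, by strong recursion. -/
noncomputable def invCoeffFun (g : PowerSeries K) (n : ℕ) : K :=
  (if n = 1 then 1 else 0) -
    ∑ d ∈ (Finset.range n).attach, invCoeffFun g d * coeff n (g ^ (d : ℕ))
termination_by n
decreasing_by exact Finset.mem_range.mp d.2

/-- The compositional left inverse of `g`. -/
noncomputable def linv (g : PowerSeries K) : PowerSeries K := PowerSeries.mk (invCoeffFun g)

lemma invCoeffFun_eq (g : PowerSeries K) (n : ℕ) :
    invCoeffFun g n = (if n = 1 then 1 else 0) -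
      ∑ d ∈ Finset.range n, invCoeffFun g d * coeff n (g ^ d) := by
  rw [invCoeffFun, ← Finset.sum_attach (Finset.range n)
    (fun d => invCoeffFun g d * coeff n (g ^ d))]

lemma constantCoeff_linv (g : PowerSeries K) : constantCoeff (linv g) = 0 := by
  rw [← coeff_zero_eq_constantCoeff_apply, linv, coeff_mk, invCoeffFun_eq]
  simp

lemma coeff_one_linv (g : PowerSeries K) : coeff 1 (linv g) = 1 := by
  rw [linv, coeff_mk, invCoeffFun_eq]
  rw [Finset.sum_range_one, pow_zero]
  simp [PowerSeries.coeff_one]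

lemma comp_linv {g : PowerSeries K} (hg0 : constantCoeff g = 0)
    (hg1 : coeff 1 g = 1) : comp (linv g) g = X := by
  ext n
  rw [coeff_comp, Finset.sum_range_succ]
  have e1 : ∀ d, coeff d (linv g) = invCoeffFun g d := fun d => coeff_mk d _
  have e2 : coeff n (g ^ n) = 1 := by rw [coeff_pow_self hg0, hg1, one_pow]
  rw [e1, e2, mul_one, invCoeffFun_eq]
  have e3 : ∀ d ∈ Finset.range n, coeff d (linv g) * coeff n (g ^ d)
      = invCoeffFun g d * coeff n (g ^ d) := fun d _ => by rw [e1]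
  rw [Finset.sum_congr rfl e3, PowerSeries.coeff_X]
  ring

lemma riordan_exists_right_inv (a : RiordanElem K) : ∃ b, a * b = 1 := by
  have hu : a.h * PowerSeries.invOfUnit a.h 1 = 1 :=
    PowerSeries.mul_invOfUnit a.h 1 (by rw [a.h_zero]; rfl)
  have hci : constantCoeff (PowerSeries.invOfUnit a.h 1) = 1 := by
    have := congrArg (constantCoeff (R := K)) hu
    rw [map_mul, a.h_zero, one_mul, map_one] at this
    exact this
  refine ⟨⟨comp (PowerSeries.invOfUnit a.h 1) (linv a.g), linv a.g, ?_, ?_, ?_⟩, ?_⟩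
  · rw [constantCoeff_comp]; exact hci
  · exact constantCoeff_linv a.g
  · exact coeff_one_linv a.g
  · have hlg := comp_linv a.g_zero a.g_one
    ext1
    · show a.h * comp (comp (PowerSeries.invOfUnit a.h 1) (linv a.g)) a.g = 1
      rw [comp_assoc (constantCoeff_linv a.g) a.g_zero, hlg, comp_X, hu]
    · show comp (linv a.g) a.g = X
      exact hlg

lemma riordan_isUnit (a : RiordanElem K) : IsUnit a := by
  obtain ⟨b, hab⟩ := riordan_exists_right_inv a
  obtain ⟨c, hbc⟩ := riordan_exists_right_inv b
  have hca : c = a := by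
    calc c = 1 * c := (one_mul c).symm
    _ = a * b * c := by rw [hab]
    _ = a * (b * c) := mul_assoc a b c
    _ = a := by rw [hbc, mul_one]
  have hba : b * a = 1 := by rw [← hca]; exact hbc
  exact ⟨⟨a, b, hab, hba⟩, rfl⟩

end AuxInverse
section AuxSubgroup

/-- Coefficientwise agreement of Riordan elements up to degree `N`. -/
def REq {K : Type*} [CommRing K] (N : ℕ) (a b : RiordanElem K) : Prop :=
  CoeffEq N a.h b.h ∧ CoeffEq N a.g b.g

lemma rEq_refl {K : Type*} [CommRing K] (N : ℕ) (a : RiordanElem K) : REq N a a :=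
  ⟨coeffEq_refl _ _, coeffEq_refl _ _⟩

lemma REq.mul {K : Type*} [CommRing K] {N : ℕ} {a b c d : RiordanElem K}
    (h1 : REq N a b) (h2 : REq N c d) : REq N (a * c) (b * d) := by
  refine ⟨?_, ?_⟩
  · rw [RiordanElem.mul_h, RiordanElem.mul_h]
    exact h1.1.mul (h2.1.comp h1.2)
  · rw [RiordanElem.mul_g, RiordanElem.mul_g]
    exact h2.2.comp h1.2

variable (p : ℕ) [Fact p.Prime]

lemma exists_pow_coeffEq (N : ℕ) (u : RiordanGroup (ZMod p)) :
    ∃ t : ℕ, REq N ((u⁻¹ : RiordanGroup (ZMod p)) : RiordanElem (ZMod p))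
      ((u ^ t : RiordanGroup (ZMod p)) : RiordanElem (ZMod p)) := by
  haveI : NeZero p := ⟨(Fact.out : p.Prime).ne_zero⟩
  have key : ∀ s t : ℕ, s < t →
      REq N ((u ^ s : RiordanGroup (ZMod p)) : RiordanElem (ZMod p)) ↑(u ^ t) →
      ∃ r : ℕ, REq N ((u⁻¹ : RiordanGroup (ZMod p)) : RiordanElem (ZMod p)) ↑(u ^ r) := by
    intro s t hlt h1
    have h2 : REq N (((u ^ (s+1))⁻¹ * u ^ s : RiordanGroup (ZMod p)) : RiordanElem (ZMod p))
        ↑((u ^ (s+1))⁻¹ * u ^ t) := by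
      rw [Units.val_mul, Units.val_mul]
      exact (rEq_refl N _).mul h1
    have e1 : (u ^ (s+1))⁻¹ * u ^ s = u⁻¹ := by group
    have e2 : (u ^ (s+1))⁻¹ * u ^ t = u ^ (t - s - 1) := by
      have hr : t = (s + 1) + (t - s - 1) := by omega
      calc (u ^ (s+1))⁻¹ * u ^ t = (u ^ (s+1))⁻¹ * (u ^ (s+1) * u ^ (t - s - 1)) := by
            rw [← pow_add, ← hr]
      _ = u ^ (t - s - 1) := by group
    rw [e1, e2] at h2
    exact ⟨t - s - 1, h2⟩
  set F : ℕ → ((Fin (N+1) → ZMod p) × (Fin (N+1) → ZMod p)) := fun m =>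
    (fun k => coeff k ((u ^ m : RiordanGroup (ZMod p)) : RiordanElem (ZMod p)).h,
     fun k => coeff k ((u ^ m : RiordanGroup (ZMod p)) : RiordanElem (ZMod p)).g)
    with hF
  obtain ⟨s, t, hst, hFeq⟩ := Finite.exists_ne_map_eq_of_infinite F
  have hREq : ∀ s t : ℕ, F s = F t → REq N ((u ^ s : RiordanGroup (ZMod p)) :
      RiordanElem (ZMod p)) ↑(u ^ t) := by
    intro s t heq
    constructor <;> intro k hk
    · have := congrFun (congrArg Prod.fst heq) ⟨k, by omega⟩
      simpa [hF] using this
    · have := congrFun (congrArg Prod.snd heq) ⟨k, by omega⟩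
      simpa [hF] using this
  rcases lt_or_gt_of_ne hst with h | h
  · exact key s t h (hREq s t hFeq)
  · exact key t s h (hREq t s hFeq.symm)

lemma MemR_pow {I J : Set ℕ} (hJ0 : 0 ∉ J)
    (c1 : ∀ j ∈ J, ∀ n : ℕ, 1 ≤ n → n ≤ j + 1 → ¬ (p ∣ Nat.choose (j + 1) n) →
      ∀ j' ∈ J, j + n * j' ∈ J)
    (c2 : ∀ i ∈ I, ∀ i' ∈ I, i + i' ∈ I)
    (c3 : ∀ i ∈ I, ∀ n : ℕ, 1 ≤ n → n ≤ i → ¬ (p ∣ Nat.choose i n) → ∀ j ∈ J, i + n * j ∈ I)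
    {a : RiordanElem (ZMod p)} (ha : MemR p I J a) : ∀ m : ℕ, MemR p I J (a ^ m)
  | 0 => by rw [pow_zero]; exact MemR_one p I J
  | (m+1) => by
      rw [pow_succ]
      exact MemR_mul p hJ0 c1 c2 c3 (MemR_pow hJ0 c1 c2 c3 ha m) ha

lemma isAdmissible_of_conditions {I J : Set ℕ} (hJ0 : 0 ∉ J)
    (c1 : ∀ j ∈ J, ∀ n : ℕ, 1 ≤ n → n ≤ j + 1 → ¬ (p ∣ Nat.choose (j + 1) n) →
      ∀ j' ∈ J, j + n * j' ∈ J)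
    (c2 : ∀ i ∈ I, ∀ i' ∈ I, i + i' ∈ I)
    (c3 : ∀ i ∈ I, ∀ n : ℕ, 1 ≤ n → n ≤ i → ¬ (p ∣ Nat.choose i n) → ∀ j ∈ J, i + n * j ∈ I) :
    IsAdmissible p I J := by
  refine ⟨{ carrier := RIJ p I J, one_mem' := ?_, mul_mem' := ?_, inv_mem' := ?_ }, rfl⟩
  · intro a b ha hb
    exact MemR_mul p hJ0 c1 c2 c3 ha hb
  · exact MemR_one p I J
  · intro u hu
    have hu' : MemR p I J (u : RiordanElem (ZMod p)) := hu
    constructor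
    · intro i hi hiI
      obtain ⟨t, ht⟩ := exists_pow_coeffEq p i u
      rw [ht.1 i le_rfl]
      have hpow : MemR p I J ((u : RiordanElem (ZMod p)) ^ t) :=
        MemR_pow p hJ0 c1 c2 c3 hu' t
      exact hpow.1 i hi hiI
    · intro j hj hjJ
      obtain ⟨t, ht⟩ := exists_pow_coeffEq p (j + 1) u
      rw [ht.2 (j + 1) le_rfl]
      have hpow : MemR p I J ((u : RiordanElem (ZMod p)) ^ t) :=
        MemR_pow p hJ0 c1 c2 c3 hu' t
      exact hpow.2 j hj hjJ

end AuxSubgroup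
section AuxForward

variable (p : ℕ)

/-- The Riordan element `(1, x + x^(γ+1))`. -/
noncomputable def E1 (γ : ℕ) (hγ : 0 < γ) : RiordanElem (ZMod p) :=
  ⟨1, elem 1 γ, map_one _, constantCoeff_elem _ _, by
    rw [coeff_elem, if_pos rfl, if_neg (by omega), add_zero]⟩

/-- The Riordan element `(1 + x^i, x)`. -/
noncomputable def H1 (i : ℕ) (hi : 0 < i) : RiordanElem (ZMod p) :=
  ⟨1 + X ^ i, X, by
    rw [← coeff_zero_eq_constantCoeff_apply, map_add, PowerSeries.coeff_one, if_pos rfl,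
      PowerSeries.coeff_X_pow, if_neg (by omega), add_zero],
    constantCoeff_X, coeff_one_X⟩

lemma memR_E1 {I J : Set ℕ} {γ : ℕ} (hγ : 0 < γ) (hγJ : γ ∈ J) :
    MemR p I J (E1 p γ hγ) := by
  constructor
  · intro i hi _
    show coeff i 1 = 0
    rw [PowerSeries.coeff_one, if_neg (by omega)]
  · intro m hm hmJ
    show coeff (m + 1) (elem 1 γ) = 0
    have hne : m ≠ γ := fun h => hmJ (h ▸ hγJ)
    rw [coeff_elem, if_neg (by omega), if_neg (by omega), add_zero]

lemma memR_H1 {I J : Set ℕ} {i : ℕ} (hi : 0 < i) (hiI : i ∈ I) :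
    MemR p I J (H1 p i hi) := by
  constructor
  · intro k hk hkI
    show coeff k (1 + X ^ i) = 0
    have hne : k ≠ i := fun h => hkI (h ▸ hiI)
    rw [map_add, PowerSeries.coeff_one, if_neg (by omega), PowerSeries.coeff_X_pow,
      if_neg hne, add_zero]
  · intro j hj _
    show coeff (j + 1) X = 0
    rw [PowerSeries.coeff_X, if_neg (by omega)]

lemma coeff_comp_elem_elem (j j' n : ℕ) (hj0 : 0 < j) (hj'0 : 0 < j') (hn1 : 1 ≤ n)
    (hn2 : n ≤ j + 1) :
    coeff (j + n * j' + 1) (comp (elem (1 : ZMod p) j) (elem (1 : ZMod p) j'))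
      = ((j + 1).choose n : ZMod p) := by
  have hjj : j' ≤ n * j' := Nat.le_mul_of_pos_left j' (by omega)
  rw [coeff_comp_elem]
  rw [Finset.sum_eq_single (j + 1)]
  · rw [Finset.sum_eq_single n]
    · rw [coeff_elem, if_neg (by omega), if_pos rfl, if_pos (by omega)]
      simp
    · intro n' hn' hne
      by_cases hcond : j + n * j' + 1 = j + 1 + n' * j'
      · exfalso
        have h1 : n * j' = n' * j' := by omega
        exact hne (Nat.eq_of_mul_eq_mul_right hj'0 h1).symm
      · rw [if_neg hcond, mul_zero, mul_zero]
    · intro h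
      exact absurd (Finset.mem_range.2 (by omega)) h
  · intro d hd hdne
    apply Finset.sum_eq_zero
    intro n' hn'
    rw [Finset.mem_range] at hd hn'
    by_cases hd1 : d = 1
    · subst hd1
      interval_cases n'
      · rw [if_neg (by omega), mul_zero, mul_zero]
      · rw [if_neg (by omega), mul_zero, mul_zero]
    · rw [coeff_elem, if_neg hd1, if_neg (fun h => hdne h), zero_add, zero_mul]
  · intro h
    exact absurd (Finset.mem_range.2 (by omega)) h

lemma coeff_comp_onePlus_elem (i j n : ℕ) (hi0 : 0 < i) (hj0 : 0 < j) (hn1 : 1 ≤ n)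
    (hn2 : n ≤ i) :
    coeff (i + n * j) (comp (1 + X ^ i) (elem (1 : ZMod p) j))
      = (i.choose n : ZMod p) := by
  have hjj : j ≤ n * j := Nat.le_mul_of_pos_left j (by omega)
  rw [coeff_comp_elem]
  rw [Finset.sum_eq_single i]
  · rw [Finset.sum_eq_single n]
    · rw [map_add, PowerSeries.coeff_one, if_neg (by omega), PowerSeries.coeff_X_pow,
        if_pos rfl, zero_add, if_pos rfl]
      simp
    · intro n' hn' hne
      by_cases hcond : i + n * j = i + n' * j
      · exfalso
        have h1 : n * j = n' * j := by omega
        exact hne (Nat.eq_of_mul_eq_mul_right hj0 h1).symm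
      · rw [if_neg hcond, mul_zero, mul_zero]
    · intro h
      exact absurd (Finset.mem_range.2 (by omega)) h
  · intro d hd hdne
    apply Finset.sum_eq_zero
    intro n' hn'
    rw [Finset.mem_range] at hd hn'
    by_cases hd0 : d = 0
    · subst hd0
      have hn'0 : n' = 0 := by omega
      subst hn'0
      rw [if_neg (by omega), mul_zero, mul_zero]
    · rw [map_add, PowerSeries.coeff_one, if_neg hd0, PowerSeries.coeff_X_pow,
        if_neg (fun h => hdne h), add_zero, zero_mul]
  · intro h
    exact absurd (Finset.mem_range.2 (by omega)) h

lemma coeff_onePlus_mul (i i' : ℕ) (hi0 : 0 < i) (hi'0 : 0 < i') :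
    coeff (i + i') ((1 + X ^ i) * (1 + X ^ i') : PowerSeries (ZMod p)) = 1 := by
  have he : ((1 : PowerSeries (ZMod p)) + X ^ i) * (1 + X ^ i')
      = 1 + X ^ i + X ^ i' + X ^ (i + i') := by
    rw [pow_add]; ring
  rw [he, map_add, map_add, map_add, PowerSeries.coeff_one, if_neg (by omega),
    PowerSeries.coeff_X_pow, if_neg (by omega), PowerSeries.coeff_X_pow, if_neg (by omega),
    PowerSeries.coeff_X_pow, if_pos rfl]
  ring

end AuxForward
/-- `(I, J)` is an admissible index-pair if and only if the three
binomial/additivity conditions of Lemma (admissible pair) hold. -/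
theorem admissible_pair_iff (p : ℕ) (hp : p.Prime) (I J : Set ℕ)
    (hI : 0 ∉ I) (hJ : 0 ∉ J) :
    IsAdmissible p I J ↔
      ((∀ j ∈ J, ∀ n : ℕ, 1 ≤ n → n ≤ j + 1 → ¬ (p ∣ Nat.choose (j + 1) n) →
          ∀ j' ∈ J, j + n * j' ∈ J) ∧
       (∀ i ∈ I, ∀ i' ∈ I, i + i' ∈ I) ∧
       (∀ i ∈ I, ∀ n : ℕ, 1 ≤ n → n ≤ i → ¬ (p ∣ Nat.choose i n) →
          ∀ j ∈ J, i + n * j ∈ I)) := by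
  haveI : Fact p.Prime := ⟨hp⟩
  haveI : Fact (1 < p) := ⟨hp.one_lt⟩
  constructor
  · rintro ⟨S, hS⟩
    have hmem : ∀ u : RiordanGroup (ZMod p), u ∈ S ↔ u ∈ RIJ p I J := by
      intro u; rw [← SetLike.mem_coe, hS]
    refine ⟨?_, ?_, ?_⟩
    · -- condition (1)
      intro j hjJ n hn1 hn2 hndvd j' hj'J
      have hj0 : 0 < j := Nat.pos_of_ne_zero (fun h => hJ (h ▸ hjJ))
      have hj'0 : 0 < j' := Nat.pos_of_ne_zero (fun h => hJ (h ▸ hj'J))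
      set u := (riordan_isUnit (E1 p j' hj'0)).unit with hu
      set v := (riordan_isUnit (E1 p j hj0)).unit with hv
      have hval_u : (u : RiordanElem (ZMod p)) = E1 p j' hj'0 := IsUnit.unit_spec _
      have hval_v : (v : RiordanElem (ZMod p)) = E1 p j hj0 := IsUnit.unit_spec _
      have huS : u ∈ S := (hmem u).2 (by
        show MemR p I J (u : RiordanElem (ZMod p))
        rw [hval_u]; exact memR_E1 p hj'0 hj'J)
      have hvS : v ∈ S := (hmem v).2 (by
        show MemR p I J (v : RiordanElem (ZMod p))
        rw [hval_v]; exact memR_E1 p hj0 hjJ)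
      have hmemuv : MemR p I J ((u * v : RiordanGroup (ZMod p)) : RiordanElem (ZMod p)) :=
        (hmem _).1 (S.mul_mem huS hvS)
      by_contra hmJ
      have hjj : j' ≤ n * j' := Nat.le_mul_of_pos_left j' (by omega)
      have hg := hmemuv.2 (j + n * j') (by omega) hmJ
      have hval : ((u * v : RiordanGroup (ZMod p)) : RiordanElem (ZMod p))
          = E1 p j' hj'0 * E1 p j hj0 := by rw [Units.val_mul, hval_u, hval_v]
      rw [hval, RiordanElem.mul_g] at hg
      have hz : ((j + 1).choose n : ZMod p) = 0 := by
        rw [← coeff_comp_elem_elem p j j' n hj0 hj'0 hn1 hn2]; exact hg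
      exact hndvd ((ZMod.natCast_eq_zero_iff _ _).1 hz)
    · -- condition (2)
      intro i hiI i' hi'I
      have hi0 : 0 < i := Nat.pos_of_ne_zero (fun h => hI (h ▸ hiI))
      have hi'0 : 0 < i' := Nat.pos_of_ne_zero (fun h => hI (h ▸ hi'I))
      set u := (riordan_isUnit (H1 p i hi0)).unit with hu
      set v := (riordan_isUnit (H1 p i' hi'0)).unit with hv
      have hval_u : (u : RiordanElem (ZMod p)) = H1 p i hi0 := IsUnit.unit_spec _
      have hval_v : (v : RiordanElem (ZMod p)) = H1 p i' hi'0 := IsUnit.unit_spec _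
      have huS : u ∈ S := (hmem u).2 (by
        show MemR p I J (u : RiordanElem (ZMod p))
        rw [hval_u]; exact memR_H1 p hi0 hiI)
      have hvS : v ∈ S := (hmem v).2 (by
        show MemR p I J (v : RiordanElem (ZMod p))
        rw [hval_v]; exact memR_H1 p hi'0 hi'I)
      have hmemuv : MemR p I J ((u * v : RiordanGroup (ZMod p)) : RiordanElem (ZMod p)) :=
        (hmem _).1 (S.mul_mem huS hvS)
      by_contra hmI
      have hh := hmemuv.1 (i + i') (by omega) hmI
      have hval : ((u * v : RiordanGroup (ZMod p)) : RiordanElem (ZMod p))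
          = H1 p i hi0 * H1 p i' hi'0 := by rw [Units.val_mul, hval_u, hval_v]
      rw [hval, RiordanElem.mul_h] at hh
      rw [show (H1 p i hi0).h = 1 + X ^ i from rfl,
        show (H1 p i' hi'0).h = 1 + X ^ i' from rfl,
        show (H1 p i hi0).g = X from rfl, comp_X,
        coeff_onePlus_mul p i i' hi0 hi'0] at hh
      exact one_ne_zero hh
    · -- condition (3)
      intro i hiI n hn1 hn2 hndvd j hjJ
      have hi0 : 0 < i := Nat.pos_of_ne_zero (fun h => hI (h ▸ hiI))
      have hj0 : 0 < j := Nat.pos_of_ne_zero (fun h => hJ (h ▸ hjJ))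
      set u := (riordan_isUnit (E1 p j hj0)).unit with hu
      set v := (riordan_isUnit (H1 p i hi0)).unit with hv
      have hval_u : (u : RiordanElem (ZMod p)) = E1 p j hj0 := IsUnit.unit_spec _
      have hval_v : (v : RiordanElem (ZMod p)) = H1 p i hi0 := IsUnit.unit_spec _
      have huS : u ∈ S := (hmem u).2 (by
        show MemR p I J (u : RiordanElem (ZMod p))
        rw [hval_u]; exact memR_E1 p hj0 hjJ)
      have hvS : v ∈ S := (hmem v).2 (by
        show MemR p I J (v : RiordanElem (ZMod p))
        rw [hval_v]; exact memR_H1 p hi0 hiI)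
      have hmemuv : MemR p I J ((u * v : RiordanGroup (ZMod p)) : RiordanElem (ZMod p)) :=
        (hmem _).1 (S.mul_mem huS hvS)
      by_contra hmI
      have hjj : j ≤ n * j := Nat.le_mul_of_pos_left j (by omega)
      have hh := hmemuv.1 (i + n * j) (by omega) hmI
      have hval : ((u * v : RiordanGroup (ZMod p)) : RiordanElem (ZMod p))
          = E1 p j hj0 * H1 p i hi0 := by rw [Units.val_mul, hval_u, hval_v]
      rw [hval, RiordanElem.mul_h] at hh
      rw [show (E1 p j hj0).h = 1 from rfl, show (H1 p i hi0).h = 1 + X ^ i from rfl,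
        show (E1 p j hj0).g = elem 1 j from rfl, one_mul,
        coeff_comp_onePlus_elem p i j n hi0 hj0 hn1 hn2] at hh
      exact hndvd ((ZMod.natCast_eq_zero_iff _ _).1 hh)
  · rintro ⟨c1, c2, c3⟩
    exact isAdmissible_of_conditions p hJ c1 c2 c3

end RiordanPaper
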